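/- (From the proof of Theorem 8.4: decomposability of P_{C_d}(λ_{d−1})) For every d ≥ 2, the following Minkowski sum identity holds in ℝ^d: conv({v ∈ {−1,0,1}^d : exactly one coordinate of v equals 0}) = conv({v ∈ {−1/2, 1/2}^d : the number of coordinates of v equal to −1/2 is even}) + conv({v ∈ {−1/2, 1/2}^d : the number of coordinates of v equal to −1/2 is odd}). In particular, the weight polytope of e_1 + ⋯ + e_{d−1} under the group of all signed permutations of coordinates is the Minkowski sum of the two half-cube weight polytopes of type D_d, hence is decomposable. -/
import Mathlib


open scoped Pointwise

open Finset

/-- Key induction: any `{-1,0,1}`-vector with an odd number of zeros lies in the convex hull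
of the vectors with exactly one zero. -/
lemma aux_mem_hull (d : ℕ) :
    ∀ n : ℕ, Odd n → ∀ v : Fin d → ℝ, (∀ i, v i = -1 ∨ v i = 0 ∨ v i = 1) →
      (Finset.univ.filter fun i => v i = 0).card = n →
      v ∈ convexHull ℝ {v : Fin d → ℝ | (∀ i, v i = -1 ∨ v i = 0 ∨ v i = 1) ∧
        (Finset.univ.filter fun i => v i = 0).card = 1} := by
  intro n
  induction n using Nat.strong_induction_on with
  | _ n ih =>
    intro hodd v hv hcard
    rcases eq_or_ne n 1 with h1 | h1
    · exact subset_convexHull ℝ _ ⟨hv, by rw [hcard, h1]⟩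
    · -- n is odd and ≠ 1, so n ≥ 3; pick two distinct zero coordinates
      have hn3 : 3 ≤ n := by
        rcases hodd with ⟨k, rfl⟩
        omega
      have h2 : 1 < (Finset.univ.filter fun i => v i = 0).card := by omega
      rw [Finset.one_lt_card_iff] at h2
      obtain ⟨i, j, hi, hj, hij⟩ := h2
      rw [Finset.mem_filter] at hi hj
      set v₁ : Fin d → ℝ := fun k => if k = i then 1 else if k = j then -1 else v k with hv₁
      set v₂ : Fin d → ℝ := fun k => if k = i then -1 else if k = j then 1 else v k with hv₂
      have hz1 : (Finset.univ.filter fun k => v₁ k = 0) =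
          ((Finset.univ.filter fun k => v k = 0).erase i).erase j := by
        ext k
        simp only [Finset.mem_filter, Finset.mem_erase, Finset.mem_univ, true_and, hv₁]
        by_cases hki : k = i
        · subst hki; simp [hij]
        · by_cases hkj : k = j
          · subst hkj; simp [hki]
          · simp [hki, hkj]
      have hz2 : (Finset.univ.filter fun k => v₂ k = 0) =
          ((Finset.univ.filter fun k => v k = 0).erase i).erase j := by
        ext k
        simp only [Finset.mem_filter, Finset.mem_erase, Finset.mem_univ, true_and, hv₂]
        by_cases hki : k = i
        · subst hki; simp [hij]
        · by_cases hkj : k = j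
          · subst hkj; simp [hki]
          · simp [hki, hkj]
      have hmemj : j ∈ (Finset.univ.filter fun i => v i = 0).erase i :=
        Finset.mem_erase.2 ⟨fun h => hij h.symm, Finset.mem_filter.2 ⟨Finset.mem_univ _, hj.2⟩⟩
      have hmemi : i ∈ (Finset.univ.filter fun i => v i = 0) :=
        Finset.mem_filter.2 ⟨Finset.mem_univ _, hi.2⟩
      have hcard' : (((Finset.univ.filter fun i => v i = 0).erase i).erase j).card = n - 2 := by
        rw [Finset.card_erase_of_mem hmemj, Finset.card_erase_of_mem hmemi, hcard]; omega
      have hodd' : Odd (n - 2) := by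
        rcases hodd with ⟨k, hk⟩
        exact ⟨k - 1, by omega⟩
      have hv1mem : v₁ ∈ convexHull ℝ {v : Fin d → ℝ | (∀ i, v i = -1 ∨ v i = 0 ∨ v i = 1) ∧
          (Finset.univ.filter fun i => v i = 0).card = 1} := by
        refine ih (n - 2) (by omega) hodd' v₁ ?_ (by rw [hz1, hcard'])
        intro k
        by_cases hki : k = i
        · right; right; simp [hv₁, hki]
        · by_cases hkj : k = j
          · have hji : ¬ j = i := fun h => hij h.symm
            left; simp [hv₁, hki, hkj, hji]
          · simpa [hv₁, hki, hkj] using hv k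
      have hv2mem : v₂ ∈ convexHull ℝ {v : Fin d → ℝ | (∀ i, v i = -1 ∨ v i = 0 ∨ v i = 1) ∧
          (Finset.univ.filter fun i => v i = 0).card = 1} := by
        refine ih (n - 2) (by omega) hodd' v₂ ?_ (by rw [hz2, hcard'])
        intro k
        by_cases hki : k = i
        · left; simp [hv₂, hki]
        · by_cases hkj : k = j
          · have hji : ¬ j = i := fun h => hij h.symm
            right; right; simp [hv₂, hki, hkj, hji]
          · simpa [hv₂, hki, hkj] using hv k
      have hdecomp : v = (1/2 : ℝ) • v₁ + (1/2 : ℝ) • v₂ := by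
        funext k
        simp only [Pi.add_apply, Pi.smul_apply, smul_eq_mul, hv₁, hv₂]
        by_cases hki : k = i
        · subst hki; simp [hi.2]
        · by_cases hkj : k = j
          · subst hkj; simp [hki, hj.2]
          · simp [hki, hkj]; ring
      rw [hdecomp]
      exact (convex_convexHull ℝ _) hv1mem hv2mem (by norm_num) (by norm_num) (by norm_num)

/-- **Decomposability of `P_{C_d}(λ_{d−1})`** (from the proof of Theorem 8.4): in `ℝ^d`, the
convex hull of the signed-permutation orbit of `e_1 + ⋯ + e_{d−1}` (the vectors with exactly
one zero coordinate and all other coordinates `±1`) is the Minkowski sum of the two type `D_d`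
half-cube weight polytopes (convex hulls of the `±1/2`-vectors with an even, respectively odd,
number of coordinates equal to `−1/2`). -/
theorem Cd_fundamental_weight_polytope_decomposes
    (d : ℕ) (hd : 2 ≤ d) :
    convexHull ℝ {v : Fin d → ℝ | (∀ i, v i = -1 ∨ v i = 0 ∨ v i = 1) ∧
        (Finset.univ.filter fun i => v i = 0).card = 1} =
      convexHull ℝ {v : Fin d → ℝ | (∀ i, v i = -(1/2) ∨ v i = 1/2) ∧
          Even (Finset.univ.filter fun i => v i = -(1/2)).card} +
        convexHull ℝ {v : Fin d → ℝ | (∀ i, v i = -(1/2) ∨ v i = 1/2) ∧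
          Odd (Finset.univ.filter fun i => v i = -(1/2)).card} := by
  set C : Set (Fin d → ℝ) := {v : Fin d → ℝ | (∀ i, v i = -1 ∨ v i = 0 ∨ v i = 1) ∧
      (Finset.univ.filter fun i => v i = 0).card = 1} with hC
  set A : Set (Fin d → ℝ) := {v : Fin d → ℝ | (∀ i, v i = -(1/2) ∨ v i = 1/2) ∧
      Even (Finset.univ.filter fun i => v i = -(1/2)).card} with hA
  set B : Set (Fin d → ℝ) := {v : Fin d → ℝ | (∀ i, v i = -(1/2) ∨ v i = 1/2) ∧
      Odd (Finset.univ.filter fun i => v i = -(1/2)).card} with hB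
  rw [← convexHull_add]
  apply le_antisymm
  · -- C ⊆ A + B, hence hull C ⊆ hull (A + B)
    apply convexHull_mono
    rintro v ⟨hv1, hv2⟩
    obtain ⟨i₀, hi₀⟩ := Finset.card_eq_one.mp hv2
    have hvi₀ : v i₀ = 0 := by
      have : i₀ ∈ Finset.univ.filter fun i => v i = 0 := hi₀ ▸ Finset.mem_singleton_self i₀
      exact (Finset.mem_filter.mp this).2
    have hne : ∀ j, j ≠ i₀ → v j ≠ 0 := by
      intro j hj hvj
      have : j ∈ Finset.univ.filter fun i => v i = 0 :=
        Finset.mem_filter.2 ⟨Finset.mem_univ _, hvj⟩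
      rw [hi₀, Finset.mem_singleton] at this
      exact hj this
    set S := Finset.univ.filter fun j => v j = (-1 : ℝ) with hS
    set ε : ℝ := if Even S.card then 1 else -1 with hε
    set a : Fin d → ℝ := fun j => if j = i₀ then ε/2 else v j / 2 with ha
    set b : Fin d → ℝ := fun j => if j = i₀ then -ε/2 else v j / 2 with hb
    have hi₀S : i₀ ∉ S := by
      simp only [hS, Finset.mem_filter]
      rintro ⟨-, h⟩; rw [hvi₀] at h; norm_num at h
    have hSa : ∀ j, j ≠ i₀ → (a j = -(1/2) ↔ v j = -1) := by
      intro j hj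
      simp only [ha, if_neg hj]
      constructor
      · intro h; linarith
      · intro h; rw [h]; norm_num
    have hSb : ∀ j, j ≠ i₀ → (b j = -(1/2) ↔ v j = -1) := by
      intro j hj
      simp only [hb, if_neg hj]
      constructor
      · intro h; linarith
      · intro h; rw [h]; norm_num
    have haA : a ∈ A := by
      constructor
      · intro j
        by_cases hj : j = i₀
        · simp only [ha, if_pos hj, hε]
          by_cases hp : Even S.card
          · right; simp [hp]
          · left; simp [hp]; norm_num
        · rcases hv1 j with h | h | h
          · left; rw [ha]; simp [hj, h] <;> norm_num
          · exact absurd h (hne j hj)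
          · right; rw [ha]; simp [hj, h]
      · by_cases hp : Even S.card
        · have : (Finset.univ.filter fun j => a j = -(1/2)) = S := by
            ext j
            simp only [Finset.mem_filter, Finset.mem_univ, true_and, hS]
            by_cases hj : j = i₀
            · subst hj
              simp only [ha, if_pos rfl, hε, if_pos hp]
              rw [hvi₀]
              constructor
              · intro h; norm_num at h
              · intro h; norm_num at h
            · exact hSa j hj
          rw [this]; exact hp
        · have : (Finset.univ.filter fun j => a j = -(1/2)) = insert i₀ S := by
            ext j
            simp only [Finset.mem_filter, Finset.mem_univ, true_and, Finset.mem_insert]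
            by_cases hj : j = i₀
            · subst hj
              simp only [ha, if_pos rfl, hε, if_neg hp]
              norm_num
            · rw [hSa j hj]
              simp only [hj, false_or, hS, Finset.mem_filter, Finset.mem_univ, true_and]
          rw [this, Finset.card_insert_of_notMem hi₀S]
          rw [Nat.even_add_one]
          simpa using hp
    have hbB : b ∈ B := by
      constructor
      · intro j
        by_cases hj : j = i₀
        · simp only [hb, if_pos hj, hε]
          by_cases hp : Even S.card
          · left; simp [hp] <;> norm_num
          · right; simp [hp] <;> norm_num
        · rcases hv1 j with h | h | h
          · left; rw [hb]; simp [hj, h] <;> norm_num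
          · exact absurd h (hne j hj)
          · right; rw [hb]; simp [hj, h]
      · by_cases hp : Even S.card
        · have : (Finset.univ.filter fun j => b j = -(1/2)) = insert i₀ S := by
            ext j
            simp only [Finset.mem_filter, Finset.mem_univ, true_and, Finset.mem_insert]
            by_cases hj : j = i₀
            · subst hj
              simp only [hb, if_pos rfl, hε, if_pos hp]
              norm_num
            · rw [hSb j hj]
              simp only [hj, false_or, hS, Finset.mem_filter, Finset.mem_univ, true_and]
          rw [this, Finset.card_insert_of_notMem hi₀S]
          exact Even.add_one hp
        · have : (Finset.univ.filter fun j => b j = -(1/2)) = S := by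
            ext j
            simp only [Finset.mem_filter, Finset.mem_univ, true_and, hS]
            by_cases hj : j = i₀
            · subst hj
              simp only [hb, if_pos rfl, hε, if_neg hp]
              rw [hvi₀]
              constructor
              · intro h; norm_num at h
              · intro h; norm_num at h
            · exact hSb j hj
          rw [this]
          exact Nat.not_even_iff_odd.mp hp
    have : v = a + b := by
      funext j
      simp only [Pi.add_apply, ha, hb]
      by_cases hj : j = i₀
      · subst hj; simp [hvi₀]; ring
      · simp [hj]
    rw [this]
    exact Set.add_mem_add haA hbB
  · -- A + B ⊆ hull C
    refine convexHull_min ?_ (convex_convexHull ℝ C)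
    rintro v ⟨a, haA, b, hbB, rfl⟩
    obtain ⟨ha1, ha2⟩ := haA
    obtain ⟨hb1, hb2⟩ := hbB
    set Sa := Finset.univ.filter fun i => a i = -(1/2 : ℝ) with hSa
    set Sb := Finset.univ.filter fun i => b i = -(1/2 : ℝ) with hSb
    have hZ : (Finset.univ.filter fun i => (a + b) i = 0) = (Sa ∪ Sb) \ (Sa ∩ Sb) := by
      ext i
      simp only [Finset.mem_filter, Finset.mem_univ, true_and, Finset.mem_sdiff,
        Finset.mem_union, Finset.mem_inter, Pi.add_apply, hSa, hSb]
      rcases ha1 i with h | h <;> rcases hb1 i with h' | h' <;> rw [h, h'] <;> norm_num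
    have hodd : Odd (Finset.univ.filter fun i => (a + b) i = 0).card := by
      rw [hZ, Finset.card_sdiff_of_subset Finset.inter_subset_union]
      have h1 := Finset.card_union_add_card_inter Sa Sb
      have h2 : (Sa ∩ Sb).card ≤ (Sa ∪ Sb).card :=
        Finset.card_le_card Finset.inter_subset_union
      rw [Nat.even_iff] at ha2
      rw [Nat.odd_iff] at hb2
      rw [Nat.odd_iff]
      omega
    have hval : ∀ i, (a + b) i = -1 ∨ (a + b) i = 0 ∨ (a + b) i = 1 := by
      intro i
      rcases ha1 i with h | h <;> rcases hb1 i with h' | h' <;>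
        simp only [Pi.add_apply, h, h'] <;> norm_num
    rw [hC]
    exact aux_mem_hull d _ hodd (a + b) hval rfl
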